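/- arXiv:0910.4743 — 5 statements merged into one kernel-verified Lean document; each statement's English description precedes it below -/
import Mathlib

section
/- Every complex anti-symmetric n×n matrix A is congruent via an invertible upper-triangular matrix to a monomial anti-symmetric matrix whose nonzero entries are ±1, with the entries +1 above the main diagonal and -1 below it; i.e., there exists an invertible upper-triangular B and such a monomial matrix M with BᵀAB = M. -/
open Matrix Finset

namespace Stmt0Helper

/-- The conclusion predicate. -/
abbrev Good {n : ℕ} (A : Matrix (Fin n) (Fin n) ℂ) : Prop :=
  ∃ B M : Matrix (Fin n) (Fin n) ℂ,
      IsUnit B ∧ (∀ i j : Fin n, j < i → B i j = 0) ∧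
      Bᵀ * A * B = M ∧ Mᵀ = -M ∧
      (∀ i j k : Fin n, M i j ≠ 0 → M i k ≠ 0 → j = k) ∧
      (∀ i j k : Fin n, M j i ≠ 0 → M k i ≠ 0 → j = k) ∧
      (∀ i j : Fin n, M i j = 0 ∨ (i < j ∧ M i j = 1) ∨ (j < i ∧ M i j = -1))

lemma sum_restrict {n m : ℕ} (s : Finset (Fin n)) (e : Fin m ≃o {x : Fin n // x ∈ s})
    (h : Fin n → ℂ) (h0 : ∀ q ∉ s, h q = 0) :
    ∑ q, h q = ∑ p, h (e p) := by
  calc ∑ q, h q = ∑ q ∈ s, h q :=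
        (Finset.sum_subset (Finset.subset_univ s) (fun x _ hx => h0 x hx)).symm
    _ = ∑ q : {x : Fin n // x ∈ s}, h (q : Fin n) := (Finset.sum_coe_sort s h).symm
    _ = ∑ p, h (e p) := (Equiv.sum_comp e.toEquiv (fun q => h (q : Fin n))).symm

lemma sum_three {n : ℕ} (x y z : Fin n) (hxy : x ≠ y) (hxz : x ≠ z) (hyz : y ≠ z)
    (f : Fin n → ℂ) (a b c : ℂ) :
    ∑ q, f q * (if q = x then a else if q = y then b else if q = z then c else 0)
      = f x * a + f y * b + f z * c := by
  have h : ∀ q, f q * (if q = x then a else if q = y then b else if q = z then c else 0)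
      = (if q = x then f x * a else 0) + (if q = y then f y * b else 0)
        + (if q = z then f z * c else 0) := by
    intro q
    by_cases h1 : q = x
    · subst h1; simp [hxy, hxz]
    · by_cases h2 : q = y
      · subst h2; simp [h1, hyz]
      · by_cases h3 : q = z
        · subst h3; simp [h1, h2]
        · simp [h1, h2, h3]
  simp only [h, Finset.sum_add_distrib, Finset.sum_ite_eq', Finset.mem_univ, if_true]

lemma isUnit_of_tri {n : ℕ} (B : Matrix (Fin n) (Fin n) ℂ)
    (ht : ∀ i j, j < i → B i j = 0) (hd : ∀ i, B i i ≠ 0) : IsUnit B := by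
  rw [Matrix.isUnit_iff_isUnit_det, isUnit_iff_ne_zero,
    Matrix.det_of_upperTriangular (fun i j h => ht i j h)]
  exact Finset.prod_ne_zero_iff.mpr fun i _ => hd i

lemma diag_ne_of_tri {n : ℕ} (B : Matrix (Fin n) (Fin n) ℂ)
    (ht : ∀ i j, j < i → B i j = 0) (hu : IsUnit B) : ∀ i, B i i ≠ 0 := by
  have hdet : B.det ≠ 0 := by
    simpa [isUnit_iff_ne_zero] using (Matrix.isUnit_iff_isUnit_det B).mp hu
  rw [Matrix.det_of_upperTriangular (fun i j h => ht i j h)] at hdet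
  intro i
  exact Finset.prod_ne_zero_iff.mp hdet i (Finset.mem_univ i)

lemma skew_apply {n : ℕ} {A : Matrix (Fin n) (Fin n) ℂ} (hA : Aᵀ = -A) (i j : Fin n) :
    A j i = - A i j := by
  have := congrFun (congrFun hA i) j
  simpa [Matrix.transpose_apply, Matrix.neg_apply] using this

lemma skew_diag {n : ℕ} {A : Matrix (Fin n) (Fin n) ℂ} (hA : Aᵀ = -A) (i : Fin n) :
    A i i = 0 := by
  have h := skew_apply hA i i
  have h2 : (2 : ℂ) * A i i = 0 := by linear_combination h
  rcases mul_eq_zero.mp h2 with h3 | h3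
  · exact absurd h3 two_ne_zero
  · exact h3

lemma skew_congr {n : ℕ} {A : Matrix (Fin n) (Fin n) ℂ} (hA : Aᵀ = -A)
    (B : Matrix (Fin n) (Fin n) ℂ) : (Bᵀ * A * B)ᵀ = -(Bᵀ * A * B) := by
  simp [Matrix.transpose_mul, hA, Matrix.mul_assoc, Matrix.neg_mul, Matrix.mul_neg]

/-- Extension step: if `A1` is already in final form outside `s`, with all
interaction entries between `s` and its complement vanishing, and the
restriction of `A1` to `s` can be put in good form, then `A1` can. -/
lemma extend {n m : ℕ} (s : Finset (Fin n)) (e : Fin m ≃o {x : Fin n // x ∈ s})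
    (A1 : Matrix (Fin n) (Fin n) ℂ) (hA1 : A1ᵀ = -A1)
    (hout : ∀ i ∉ s, ∀ j ∈ s, A1 i j = 0)
    (hsgn : ∀ i ∉ s, ∀ j ∉ s, A1 i j = 0 ∨ (i < j ∧ A1 i j = 1) ∨ (j < i ∧ A1 i j = -1))
    (hmon : ∀ i ∉ s, ∀ j ∉ s, ∀ l ∉ s, A1 i j ≠ 0 → A1 i l ≠ 0 → j = l)
    (hEx : Good (A1.submatrix (fun p => ((e p : Fin n))) (fun p => ((e p : Fin n))))) :
    Good A1 := by
  classical
  obtain ⟨B', M', hU, hT, hBM, hMa, hMr, hMc, hMs⟩ := hEx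
  have heFmem : ∀ p, ((e p : Fin n)) ∈ s := fun p => (e p).2
  have hlt : ∀ p q, p < q → ((e p : Fin n)) < ((e q : Fin n)) :=
    fun p q h => Subtype.coe_lt_coe.mpr (e.strictMono h)
  have hsurj : ∀ i, i ∈ s → ∃ p, ((e p : Fin n)) = i := fun i hi =>
    ⟨e.symm ⟨i, hi⟩, by simp⟩
  set B2 : Matrix (Fin n) (Fin n) ℂ := Matrix.of (fun i j =>
    if hi : i ∈ s then (if hj : j ∈ s then B' (e.symm ⟨i, hi⟩) (e.symm ⟨j, hj⟩) else 0)
    else (if i = j then 1 else 0)) with hB2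
  have hB2row : ∀ i ∉ s, ∀ j, B2 i j = if i = j then 1 else 0 := by
    intro i hi j; simp [hB2, hi]
  have hB2col : ∀ j ∉ s, ∀ i, B2 i j = if i = j then 1 else 0 := by
    intro j hj i
    by_cases hi : i ∈ s
    · have hne : i ≠ j := fun h => hj (h ▸ hi)
      simp [hB2, hi, hj, hne]
    · simp [hB2, hi]
  have hB2e : ∀ p q, B2 ((e p : Fin n)) ((e q : Fin n)) = B' p q := by
    intro p q
    have h1 : (⟨(e p : Fin n), heFmem p⟩ : {x : Fin n // x ∈ s}) = e p := Subtype.ext rfl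
    have h2 : (⟨(e q : Fin n), heFmem q⟩ : {x : Fin n // x ∈ s}) = e q := Subtype.ext rfl
    simp only [hB2, Matrix.of_apply, dif_pos (heFmem p), dif_pos (heFmem q), h1, h2,
      OrderIso.symm_apply_apply]
  have hB2t : ∀ i j, j < i → B2 i j = 0 := by
    intro i j hji
    by_cases hi : i ∈ s
    · by_cases hj : j ∈ s
      · simp only [hB2, Matrix.of_apply, dif_pos hi, dif_pos hj]
        exact hT _ _ (e.symm.strictMono (Subtype.mk_lt_mk.mpr hji))
      · simp [hB2, hi, hj]
    · have hne : i ≠ j := (ne_of_gt hji)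
      simp [hB2, hi, hne]
  have hB'diag := diag_ne_of_tri B' hT hU
  have hB2d : ∀ i, B2 i i ≠ 0 := by
    intro i
    by_cases hi : i ∈ s
    · simpa [hB2, hi] using hB'diag (e.symm ⟨i, hi⟩)
    · simp [hB2, hi]
  have hB2u : IsUnit B2 := isUnit_of_tri B2 hB2t hB2d
  set M : Matrix (Fin n) (Fin n) ℂ := B2ᵀ * A1 * B2 with hM
  have hMskew : Mᵀ = -M := skew_congr hA1 B2
  have hMentry : ∀ i j, M i j = ∑ q, (∑ p, B2 p i * A1 p q) * B2 q j := by
    intro i j; simp [hM, Matrix.mul_apply, Matrix.transpose_apply]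
  have hF1 : ∀ i ∉ s, ∀ j, M i j = if j ∈ s then 0 else A1 i j := by
    intro i hi j
    rw [hMentry]
    have hin : ∀ q, (∑ p, B2 p i * A1 p q) = A1 i q := by
      intro q
      have hpt : ∀ p, B2 p i * A1 p q = (if p = i then A1 p q else 0) := by
        intro p
        rw [hB2col i hi p]
        split_ifs <;> simp
      simp only [hpt, Finset.sum_ite_eq', Finset.mem_univ, if_true]
    simp only [hin]
    by_cases hj : j ∈ s
    · rw [if_pos hj]
      apply Finset.sum_eq_zero
      intro q _
      by_cases hq : q ∈ s
      · rw [hout i hi q hq, zero_mul]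
      · rw [hB2row q hq j, if_neg (fun h => hq (by rw [h]; exact hj)), mul_zero]
    · rw [if_neg hj]
      have hpt : ∀ q, A1 i q * B2 q j = (if q = j then A1 i q else 0) := by
        intro q
        rw [hB2col j hj q]
        split_ifs <;> simp
      simp only [hpt, Finset.sum_ite_eq', Finset.mem_univ, if_true]
  have hF2 : ∀ p0 q0, M ((e p0 : Fin n)) ((e q0 : Fin n)) = M' p0 q0 := by
    intro p0 q0
    rw [hMentry]
    have hinner : ∀ q, (∑ p, B2 p ((e p0 : Fin n)) * A1 p q)
        = ∑ p', B' p' p0 * A1 ((e p' : Fin n)) q := by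
      intro q
      have hvan : ∀ p ∉ s, B2 p ((e p0 : Fin n)) * A1 p q = 0 := fun p hp => by
        rw [hB2row p hp, if_neg (fun h => hp (by rw [h]; exact heFmem p0)), zero_mul]
      rw [sum_restrict s e _ hvan]
      exact Finset.sum_congr rfl (fun p' _ => by rw [hB2e])
    calc ∑ q, (∑ p, B2 p ((e p0 : Fin n)) * A1 p q) * B2 q ((e q0 : Fin n))
        = ∑ q, (∑ p', B' p' p0 * A1 ((e p' : Fin n)) q) * B2 q ((e q0 : Fin n)) :=
          Finset.sum_congr rfl (fun q _ => by rw [hinner])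
      _ = ∑ q', (∑ p', B' p' p0 * A1 ((e p' : Fin n)) ((e q' : Fin n))) * B' q' q0 := by
          have hvan2 : ∀ q ∉ s,
              (∑ p', B' p' p0 * A1 ((e p' : Fin n)) q) * B2 q ((e q0 : Fin n)) = 0 :=
            fun q hq => by
              rw [hB2row q hq, if_neg (fun h => hq (by rw [h]; exact heFmem q0)), mul_zero]
          rw [sum_restrict s e _ hvan2]
          exact Finset.sum_congr rfl (fun q' _ => by rw [hB2e])
      _ = M' p0 q0 := by
          rw [← hBM]
          simp [Matrix.mul_apply, Matrix.transpose_apply, Matrix.submatrix_apply]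
  have hF4 : ∀ p0, ∀ j ∉ s, M ((e p0 : Fin n)) j = 0 := by
    intro p0 j hj
    rw [skew_apply hMskew j ((e p0 : Fin n)), hF1 j hj, if_pos (heFmem p0), neg_zero]
  have hrow : ∀ i j l, M i j ≠ 0 → M i l ≠ 0 → j = l := by
    intro i j l hj hl
    by_cases hi : i ∈ s
    · obtain ⟨p0, rfl⟩ := hsurj i hi
      by_cases hjs : j ∈ s
      · by_cases hls : l ∈ s
        · obtain ⟨q1, rfl⟩ := hsurj j hjs
          obtain ⟨q2, rfl⟩ := hsurj l hls
          rw [hF2] at hj hl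
          rw [hMr p0 q1 q2 hj hl]
        · exact absurd (hF4 p0 l hls) hl
      · exact absurd (hF4 p0 j hjs) hj
    · by_cases hjs : j ∈ s
      · rw [hF1 i hi j, if_pos hjs] at hj; exact absurd rfl hj
      · by_cases hls : l ∈ s
        · rw [hF1 i hi l, if_pos hls] at hl; exact absurd rfl hl
        · rw [hF1 i hi j, if_neg hjs] at hj
          rw [hF1 i hi l, if_neg hls] at hl
          exact hmon i hi j hjs l hls hj hl
  have hcol : ∀ i j l, M j i ≠ 0 → M l i ≠ 0 → j = l := by
    intro i j l hj hl
    apply hrow i j l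
    · intro h; exact hj (by rw [skew_apply hMskew i j, h, neg_zero])
    · intro h; exact hl (by rw [skew_apply hMskew i l, h, neg_zero])
  have hsg : ∀ i j, M i j = 0 ∨ (i < j ∧ M i j = 1) ∨ (j < i ∧ M i j = -1) := by
    intro i j
    by_cases hi : i ∈ s
    · obtain ⟨p0, rfl⟩ := hsurj i hi
      by_cases hjs : j ∈ s
      · obtain ⟨q0, rfl⟩ := hsurj j hjs
        rw [hF2]
        rcases hMs p0 q0 with h | ⟨h1, h2⟩ | ⟨h1, h2⟩
        · exact Or.inl h
        · exact Or.inr (Or.inl ⟨hlt _ _ h1, h2⟩)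
        · exact Or.inr (Or.inr ⟨hlt _ _ h1, h2⟩)
      · exact Or.inl (hF4 p0 j hjs)
    · rw [hF1 i hi j]
      by_cases hjs : j ∈ s
      · rw [if_pos hjs]; exact Or.inl rfl
      · rw [if_neg hjs]; exact hsgn i hi j hjs
  exact ⟨B2, M, hB2u, hB2t, hM.symm, hMskew, hrow, hcol, hsg⟩


lemma main : ∀ n : ℕ, ∀ A : Matrix (Fin n) (Fin n) ℂ, Aᵀ = -A → Good A := by
  intro n
  induction n using Nat.strong_induction_on with
  | _ n IH =>
    intro A hA
    classical
    cases n with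
    | zero =>
      exact ⟨1, A, isUnit_one, fun i => i.elim0, by simp, hA, fun i => i.elim0,
        fun i => i.elim0, fun i => i.elim0⟩
    | succ n' =>
      by_cases hz : ∀ j, A 0 j = 0
      · -- first row (and column) vanish
        set s : Finset (Fin (n'+1)) := ({0} : Finset (Fin (n'+1)))ᶜ with hs
        have hnot : ∀ i : Fin (n'+1), i ∉ s ↔ i = 0 := by intro i; simp [hs]
        have hcard : s.card = n' := by
          rw [hs, Finset.card_compl]; simp
        apply extend s (s.orderIsoOfFin hcard) A hA
        · intro i hi j _
          rw [(hnot i).mp hi]; exact hz j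
        · intro i hi j hj
          rw [(hnot i).mp hi, (hnot j).mp hj]
          exact Or.inl (hz 0)
        · intro i _ j hj l hl _ _
          rw [(hnot j).mp hj, (hnot l).mp hl]
        · apply IH n' (Nat.lt_succ_self n')
          ext i j
          simp only [Matrix.transpose_apply, Matrix.submatrix_apply, Matrix.neg_apply]
          exact skew_apply hA _ _
      · -- pivot case
        push_neg at hz
        set t : Finset (Fin (n'+1)) := univ.filter (fun j => A 0 j ≠ 0) with ht
        have htne : t.Nonempty := by
          obtain ⟨j, hj⟩ := hz; exact ⟨j, by simp [ht, hj]⟩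
        set k : Fin (n'+1) := t.min' htne with hkdef
        have hk : A 0 k ≠ 0 := by
          have := t.min'_mem htne
          simp only [ht, Finset.mem_filter] at this
          exact this.2
        have hmin : ∀ j, j < k → A 0 j = 0 := by
          intro j hj
          by_contra h
          exact absurd (t.min'_le j (by simp [ht, h])) (not_le.mpr hj)
        have hk0 : k ≠ 0 := fun h => hk (by rw [h]; exact skew_diag hA 0)
        have h0k : (0 : Fin (n'+1)) < k := Fin.pos_of_ne_zero hk0
        set B1 : Matrix (Fin (n'+1)) (Fin (n'+1)) ℂ := Matrix.of (fun q j =>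
          if j = 0 then (if q = 0 then 1 else 0)
          else if j = k then (if q = k then (A 0 k)⁻¹ else 0)
          else if q = j then 1 else if q = 0 then A k j * (A 0 k)⁻¹
          else if q = k then -(A 0 j) * (A 0 k)⁻¹ else 0) with hB1
        have hcol0 : ∀ p, B1 p 0 = if p = 0 then 1 else 0 := by
          intro p; simp [hB1]
        have hcolk : ∀ p, B1 p k = if p = k then (A 0 k)⁻¹ else 0 := by
          intro p; simp [hB1, hk0]
        have hcolj : ∀ j, j ≠ 0 → j ≠ k → ∀ p, B1 p j =
            (if p = j then 1 else if p = 0 then A k j * (A 0 k)⁻¹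
              else if p = k then -(A 0 j) * (A 0 k)⁻¹ else 0) := by
          intro j h1 h2 p; simp [hB1, h1, h2]
        have hB1t : ∀ i j, j < i → B1 i j = 0 := by
          intro i j hji
          by_cases hj0 : j = 0
          · subst hj0
            have hi0 : i ≠ 0 := Fin.pos_iff_ne_zero.mp hji
            simp [hB1, hi0]
          · by_cases hjk : j = k
            · subst hjk
              have hik : i ≠ k := ne_of_gt hji
              simp [hB1, hk0, hik]
            · rw [hcolj j hj0 hjk i]
              have h1 : i ≠ j := ne_of_gt hji
              rw [if_neg h1]
              by_cases hi0 : i = 0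
              · subst hi0
                exact absurd hji (by simp)
              · rw [if_neg hi0]
                by_cases hik : i = k
                · rw [if_pos hik]
                  have hjk2 : j < k := hik ▸ hji
                  rw [hmin j hjk2]; ring
                · rw [if_neg hik]
        have hB1d : ∀ i, B1 i i ≠ 0 := by
          intro i
          by_cases h0 : i = 0
          · subst h0; simp [hB1]
          · by_cases hk2 : i = k
            · subst hk2
              simpa [hB1, hk0] using inv_ne_zero hk
            · rw [hcolj i h0 hk2 i, if_pos rfl]; exact one_ne_zero
        set A1 : Matrix (Fin (n'+1)) (Fin (n'+1)) ℂ := B1ᵀ * A * B1 with hA1def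
        have hA1 : A1ᵀ = -A1 := skew_congr hA B1
        have hMent : ∀ i j, A1 i j = ∑ q, (∑ p, B1 p i * A p q) * B1 q j := by
          intro i j; simp [hA1def, Matrix.mul_apply, Matrix.transpose_apply]
        have hin0 : ∀ q, (∑ p, B1 p 0 * A p q) = A 0 q := by
          intro q
          have hpt : ∀ p, B1 p 0 * A p q = if p = 0 then A p q else 0 := by
            intro p; rw [hcol0]; split_ifs <;> simp
          simp only [hpt, Finset.sum_ite_eq', Finset.mem_univ, if_true]
        have hink : ∀ q, (∑ p, B1 p k * A p q) = (A 0 k)⁻¹ * A k q := by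
          intro q
          have hpt : ∀ p, B1 p k * A p q = if p = k then (A 0 k)⁻¹ * A p q else 0 := by
            intro p; rw [hcolk]; split_ifs <;> simp
          simp only [hpt, Finset.sum_ite_eq', Finset.mem_univ, if_true]
        have hr0 : ∀ j, A1 0 j = if j = k then 1 else 0 := by
          intro j
          rw [hMent]
          simp only [hin0]
          by_cases hj0 : j = 0
          · subst hj0
            rw [if_neg (Ne.symm hk0)]
            have hpt : ∀ q, A 0 q * B1 q 0 = if q = 0 then A 0 q else 0 := by
              intro q; rw [hcol0]; split_ifs <;> simp
            simp only [hpt, Finset.sum_ite_eq', Finset.mem_univ, if_true]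
            exact skew_diag hA 0
          · by_cases hjk : j = k
            · subst hjk
              rw [if_pos rfl]
              have hpt : ∀ q, A 0 q * B1 q k = if q = k then A 0 q * (A 0 k)⁻¹ else 0 := by
                intro q; rw [hcolk]; split_ifs <;> simp
              simp only [hpt, Finset.sum_ite_eq', Finset.mem_univ, if_true]
              field_simp
            · rw [if_neg hjk]
              simp only [hcolj j hj0 hjk]
              rw [sum_three j 0 k hj0 hjk (Ne.symm hk0)]
              rw [skew_diag hA 0]
              field_simp
              ring
        have hrk : ∀ j, A1 k j = if j = 0 then -1 else 0 := by
          intro j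
          rw [hMent]
          simp only [hink]
          by_cases hj0 : j = 0
          · subst hj0
            rw [if_pos rfl]
            have hpt : ∀ q, (A 0 k)⁻¹ * A k q * B1 q 0
                = if q = 0 then (A 0 k)⁻¹ * A k q else 0 := by
              intro q; rw [hcol0]; split_ifs <;> simp
            simp only [hpt, Finset.sum_ite_eq', Finset.mem_univ, if_true]
            rw [skew_apply hA 0 k]
            field_simp
          · by_cases hjk : j = k
            · subst hjk
              rw [if_neg hj0]
              have hpt : ∀ q, (A 0 k)⁻¹ * A k q * B1 q k
                  = if q = k then (A 0 k)⁻¹ * A k q * (A 0 k)⁻¹ else 0 := by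
                intro q; rw [hcolk]; split_ifs <;> simp
              simp only [hpt, Finset.sum_ite_eq', Finset.mem_univ, if_true]
              rw [skew_diag hA k]
              ring
            · rw [if_neg hj0]
              simp only [hcolj j hj0 hjk]
              rw [sum_three j 0 k hj0 hjk (Ne.symm hk0) (fun q => (A 0 k)⁻¹ * A k q)]
              rw [skew_apply hA 0 k, skew_diag hA k]
              field_simp
              ring
        -- now extend from the complement of {0, k}
        set s : Finset (Fin (n'+1)) := ({0, k} : Finset (Fin (n'+1)))ᶜ with hs
        have hnot : ∀ i : Fin (n'+1), i ∉ s ↔ (i = 0 ∨ i = k) := by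
          intro i
          simp only [hs, Finset.mem_compl, not_not, Finset.mem_insert, Finset.mem_singleton]
        have hmem : ∀ i : Fin (n'+1), i ∈ s ↔ (i ≠ 0 ∧ i ≠ k) := by
          intro i
          simp only [hs, Finset.mem_compl, Finset.mem_insert, Finset.mem_singleton, not_or]
        have hcard : s.card = n' + 1 - 2 := by
          rw [hs, Finset.card_compl]
          have h2 : ({0, k} : Finset (Fin (n'+1))).card = 2 := by
            rw [Finset.card_insert_of_notMem (by simp [Ne.symm hk0])]
            simp
          simp [h2]
        have hGood1 : Good A1 := by
          apply extend s (s.orderIsoOfFin hcard) A1 hA1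
          · intro i hi j hj
            have hj2 := (hmem j).mp hj
            rcases (hnot i).mp hi with rfl | rfl
            · rw [hr0 j, if_neg hj2.2]
            · rw [hrk j, if_neg hj2.1]
          · intro i hi j hj
            rcases (hnot i).mp hi with rfl | rfl <;> rcases (hnot j).mp hj with rfl | rfl
            · exact Or.inl (by rw [hr0, if_neg (Ne.symm hk0)])
            · exact Or.inr (Or.inl ⟨h0k, by rw [hr0, if_pos rfl]⟩)
            · exact Or.inr (Or.inr ⟨h0k, by rw [hrk, if_pos rfl]⟩)
            · exact Or.inl (by rw [hrk, if_neg hk0])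
          · intro i hi j hj l hl h1 h2
            rcases (hnot i).mp hi with rfl | rfl
            · have hjj : ∀ x, A1 0 x ≠ 0 → x = k := by
                intro x hx
                by_contra hc
                exact hx (by rw [hr0, if_neg hc])
              rw [hjj j h1, hjj l h2]
            · have hjj : ∀ x, A1 k x ≠ 0 → x = 0 := by
                intro x hx
                by_contra hc
                exact hx (by rw [hrk, if_neg hc])
              rw [hjj j h1, hjj l h2]
          · apply IH (n' + 1 - 2) (by omega)
            ext i j
            simp only [Matrix.transpose_apply, Matrix.submatrix_apply, Matrix.neg_apply]
            exact skew_apply hA1 _ _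
        obtain ⟨B2, M, hu2, ht2, hm2, hma, hmr, hmc, hms⟩ := hGood1
        refine ⟨B1 * B2, M, (isUnit_of_tri B1 hB1t hB1d).mul hu2, ?_, ?_, hma, hmr, hmc, hms⟩
        · intro i j hji
          have h1 : B1.BlockTriangular id := fun a b h => hB1t a b h
          have h2 : B2.BlockTriangular id := fun a b h => ht2 a b h
          exact (h1.mul h2) hji
        · rw [← hm2, hA1def, Matrix.transpose_mul]
          noncomm_ring

end Stmt0Helper


/-- Every complex anti-symmetric matrix is congruent via an invertible
upper-triangular matrix to a monomial anti-symmetric matrix whose nonzero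
entries are `+1` above the diagonal and `-1` below it. -/
theorem stmt0 (n : ℕ) (A : Matrix (Fin n) (Fin n) ℂ) (hA : Aᵀ = -A) :
    ∃ B M : Matrix (Fin n) (Fin n) ℂ,
      IsUnit B ∧ (∀ i j : Fin n, j < i → B i j = 0) ∧
      Bᵀ * A * B = M ∧
      Mᵀ = -M ∧
      (∀ i j k : Fin n, M i j ≠ 0 → M i k ≠ 0 → j = k) ∧
      (∀ i j k : Fin n, M j i ≠ 0 → M k i ≠ 0 → j = k) ∧
      (∀ i j : Fin n, M i j = 0 ∨ (i < j ∧ M i j = 1) ∨ (j < i ∧ M i j = -1)) :=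
  Stmt0Helper.main n A hA
end

section
/- Let X, Y be n×n matrices over a field with Y = L X B for some invertible lower-triangular matrix L and some invertible upper-triangular matrix B. Then for all 1 ≤ k, ℓ ≤ n, the upper-left k×ℓ submatrices of X and Y have equal rank. -/
open Matrix

private lemma sum_restrict {F : Type*} [AddCommMonoid F] {n k : ℕ} (hk : k ≤ n)
    (f : Fin n → F) (hf : ∀ a : Fin n, k ≤ (a : ℕ) → f a = 0) :
    ∑ a : Fin n, f a = ∑ a : Fin k, f (Fin.castLE hk a) := by
  have h1 : ∑ a : Fin k, f (Fin.castLE hk a) = ∑ a ∈ Finset.univ.map (Fin.castLEEmb hk), f a := by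
    rw [Finset.sum_map]; rfl
  rw [h1]
  symm
  apply Finset.sum_subset (Finset.subset_univ _)
  intro a _ ha
  apply hf
  by_contra hlt
  push_neg at hlt
  exact ha (Finset.mem_map.mpr ⟨⟨a, hlt⟩, Finset.mem_univ _, rfl⟩)

private lemma submatrix_mul_left {F : Type*} [Field F] {n k : ℕ} {ι ι' : Type*} (hk : k ≤ n)
    (L : Matrix (Fin n) (Fin n) F) (N : Matrix (Fin n) ι F)
    (hLT : ∀ i j : Fin n, i < j → L i j = 0) (g : ι' → ι) :
    (L * N).submatrix (Fin.castLE hk) g =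
      L.submatrix (Fin.castLE hk) (Fin.castLE hk) * N.submatrix (Fin.castLE hk) g := by
  ext i j
  simp only [submatrix_apply, mul_apply]
  rw [sum_restrict hk]
  intro a ha
  rw [hLT _ _ (by simpa [Fin.lt_def] using lt_of_lt_of_le i.isLt ha), zero_mul]

private lemma submatrix_mul_right {F : Type*} [Field F] {n l : ℕ} {ι ι' : Type*} (hl : l ≤ n)
    (B : Matrix (Fin n) (Fin n) F) (N : Matrix ι (Fin n) F)
    (hBT : ∀ i j : Fin n, j < i → B i j = 0) (g : ι' → ι) :
    (N * B).submatrix g (Fin.castLE hl) =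
      N.submatrix g (Fin.castLE hl) * B.submatrix (Fin.castLE hl) (Fin.castLE hl) := by
  ext i j
  simp only [submatrix_apply, mul_apply]
  rw [sum_restrict hl]
  intro a ha
  rw [hBT _ _ (by simpa [Fin.lt_def] using lt_of_lt_of_le j.isLt ha), mul_zero]

private lemma det_sub_lower {F : Type*} [Field F] {n k : ℕ} (hk : k ≤ n)
    (L : Matrix (Fin n) (Fin n) F)
    (hLT : ∀ i j : Fin n, i < j → L i j = 0) (hL : IsUnit L) :
    IsUnit (L.submatrix (Fin.castLE hk) (Fin.castLE hk)).det := by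
  have hdet : IsUnit L.det := hL.map (detMonoidHom (n := Fin n) (R := F))
  have hLtri : L.BlockTriangular OrderDual.toDual := by
    intro i j hij
    exact hLT i j (by exact_mod_cast hij)
  rw [det_of_lowerTriangular L hLtri] at hdet
  have hdiag : ∀ i : Fin n, L i i ≠ 0 := by
    intro i hi
    rw [isUnit_iff_ne_zero] at hdet
    exact hdet (Finset.prod_eq_zero (Finset.mem_univ i) hi)
  have : (L.submatrix (Fin.castLE hk) (Fin.castLE hk)).BlockTriangular OrderDual.toDual := by
    intro i j hij
    exact hLT _ _ (show (i : ℕ) < (j : ℕ) from hij)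
  rw [det_of_lowerTriangular _ this, isUnit_iff_ne_zero]
  exact Finset.prod_ne_zero_iff.mpr fun i _ => hdiag _

private lemma det_sub_upper {F : Type*} [Field F] {n l : ℕ} (hl : l ≤ n)
    (B : Matrix (Fin n) (Fin n) F)
    (hBT : ∀ i j : Fin n, j < i → B i j = 0) (hB : IsUnit B) :
    IsUnit (B.submatrix (Fin.castLE hl) (Fin.castLE hl)).det := by
  have hdet : IsUnit B.det := hB.map (detMonoidHom (n := Fin n) (R := F))
  have hBtri : B.BlockTriangular id := by
    intro i j hij
    exact hBT i j hij
  rw [det_of_upperTriangular hBtri] at hdet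
  have hdiag : ∀ i : Fin n, B i i ≠ 0 := by
    intro i hi
    rw [isUnit_iff_ne_zero] at hdet
    exact hdet (Finset.prod_eq_zero (Finset.mem_univ i) hi)
  have : (B.submatrix (Fin.castLE hl) (Fin.castLE hl)).BlockTriangular id := by
    intro i j hij
    exact hBT _ _ (show (j : ℕ) < (i : ℕ) from hij)
  rw [det_of_upperTriangular this, isUnit_iff_ne_zero]
  exact Finset.prod_ne_zero_iff.mpr fun i _ => hdiag _

/-- If `Y = L X B` with `L` invertible lower-triangular and `B` invertible
upper-triangular, then for all `1 ≤ k, ℓ ≤ n` the upper-left `k × ℓ`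
submatrices of `X` and `Y` have equal rank. -/
theorem stmt4 {F : Type*} [Field F] (n : ℕ) (X Y L B : Matrix (Fin n) (Fin n) F)
    (hLT : ∀ i j : Fin n, i < j → L i j = 0) (hL : IsUnit L)
    (hBT : ∀ i j : Fin n, j < i → B i j = 0) (hB : IsUnit B)
    (h : Y = L * X * B)
    (k l : ℕ) (hk1 : 1 ≤ k) (hk : k ≤ n) (hl1 : 1 ≤ l) (hl : l ≤ n) :
    (X.submatrix (Fin.castLE hk) (Fin.castLE hl)).rank =
      (Y.submatrix (Fin.castLE hk) (Fin.castLE hl)).rank := by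
  subst h
  have e1 : ((L * X * B).submatrix (Fin.castLE hk) (Fin.castLE hl)) =
      (L.submatrix (Fin.castLE hk) (Fin.castLE hk)) *
        (X.submatrix (Fin.castLE hk) (Fin.castLE hl)) *
        (B.submatrix (Fin.castLE hl) (Fin.castLE hl)) := by
    rw [submatrix_mul_right hl B (L * X) hBT (Fin.castLE hk),
      submatrix_mul_left hk L X hLT (Fin.castLE hl)]
  rw [e1, rank_mul_eq_left_of_isUnit_det _ _ (det_sub_upper hl B hBT hB),
    rank_mul_eq_right_of_isUnit_det _ _ (det_sub_lower hk L hLT hL)]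
end

section
/- If X is an anti-symmetric n×n complex matrix and B is an invertible upper-triangular matrix, then X and BᵀXB have the same rank-control matrix, i.e., rank((BᵀXB)_{kℓ}) = rank(X_{kℓ}) for all 1 ≤ k, ℓ ≤ n. -/
open Matrix

lemma aux_sum_trunc {M : Type*} [AddCommMonoid M] {m n : ℕ} (h : m ≤ n) (f : Fin n → M)
    (hf : ∀ p : Fin n, m ≤ (p : ℕ) → f p = 0) :
    ∑ p : Fin n, f p = ∑ p : Fin m, f (Fin.castLE h p) := by
  have : ∑ p : Fin m, f (Fin.castLE h p) =
      ∑ p ∈ Finset.univ.map (Fin.castLEOrderEmb h).toEmbedding, f p := by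
    rw [Finset.sum_map]; rfl
  rw [this]
  refine (Finset.sum_subset (Finset.subset_univ _) ?_).symm
  intro p _ hp
  apply hf
  by_contra hc
  push_neg at hc
  exact hp (Finset.mem_map.mpr ⟨⟨p, hc⟩, Finset.mem_univ _, rfl⟩)

lemma aux_diag_ne (n : ℕ) (B : Matrix (Fin n) (Fin n) ℂ)
    (hB : IsUnit B) (hBT : ∀ i j : Fin n, j < i → B i j = 0) (i : Fin n) :
    B i i ≠ 0 := by
  have hdet : IsUnit B.det := (Matrix.isUnit_iff_isUnit_det B).mp hB
  rw [Matrix.det_of_upperTriangular (by exact fun a b h => hBT a b h)] at hdet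
  intro h
  apply hdet.ne_zero
  exact Finset.prod_eq_zero (Finset.mem_univ i) h

lemma aux_sub_unit (n m : ℕ) (B : Matrix (Fin n) (Fin n) ℂ)
    (hB : IsUnit B) (hBT : ∀ i j : Fin n, j < i → B i j = 0) (hm : m ≤ n) :
    IsUnit (B.submatrix (Fin.castLE hm) (Fin.castLE hm)).det := by
  rw [Matrix.det_of_upperTriangular (M := B.submatrix (Fin.castLE hm) (Fin.castLE hm))
    (by intro a b h; exact hBT _ _ (by simpa using h))]
  apply isUnit_of_mul_isUnit_left (y := 1)
  rw [mul_one]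
  exact (Finset.prod_ne_zero_iff.mpr fun i _ =>
    aux_diag_ne n B hB hBT _).isUnit

/-- An anti-symmetric complex matrix `X` and `Bᵀ X B`, for `B` invertible
upper-triangular, have the same rank-control matrix. -/
theorem stmt5 (n : ℕ) (X B : Matrix (Fin n) (Fin n) ℂ) (hX : Xᵀ = -X)
    (hB : IsUnit B) (hBT : ∀ i j : Fin n, j < i → B i j = 0)
    (k l : ℕ) (hk1 : 1 ≤ k) (hk : k ≤ n) (hl1 : 1 ≤ l) (hl : l ≤ n) :
    ((Bᵀ * X * B).submatrix (Fin.castLE hk) (Fin.castLE hl)).rank =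
      (X.submatrix (Fin.castLE hk) (Fin.castLE hl)).rank := by
  have key : (Bᵀ * X * B).submatrix (Fin.castLE hk) (Fin.castLE hl) =
      (B.submatrix (Fin.castLE hk) (Fin.castLE hk))ᵀ *
        (X.submatrix (Fin.castLE hk) (Fin.castLE hl)) *
        (B.submatrix (Fin.castLE hl) (Fin.castLE hl)) := by
    ext i j
    simp only [submatrix_apply, mul_apply, transpose_apply]
    have hin : ∀ q : Fin n, ∑ p : Fin n, B p (Fin.castLE hk i) * X p q =
        ∑ p : Fin k, B (Fin.castLE hk p) (Fin.castLE hk i) * X (Fin.castLE hk p) q := by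
      intro q
      refine aux_sum_trunc hk _ fun p hp => ?_
      rw [hBT p (Fin.castLE hk i) (Fin.lt_iff_val_lt_val.mpr (by simpa using lt_of_lt_of_le i.isLt hp)), zero_mul]
    calc ∑ q : Fin n, (∑ p : Fin n, B p (Fin.castLE hk i) * X p q) * B q (Fin.castLE hl j)
        = ∑ q : Fin l, (∑ p : Fin n, B p (Fin.castLE hk i) * X p (Fin.castLE hl q)) *
            B (Fin.castLE hl q) (Fin.castLE hl j) := by
          refine aux_sum_trunc hl _ fun q hq => ?_
          rw [hBT q (Fin.castLE hl j) (Fin.lt_iff_val_lt_val.mpr (by simpa using lt_of_lt_of_le j.isLt hq)), mul_zero]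
      _ = _ := by
          refine Finset.sum_congr rfl fun q _ => ?_
          rw [hin]
  rw [key]
  rw [Matrix.rank_mul_eq_left_of_isUnit_det _ _ (aux_sub_unit n l B hB hBT hl)]
  rw [Matrix.rank_mul_eq_right_of_isUnit_det _ _ ?_]
  rw [Matrix.det_transpose]
  exact aux_sub_unit n k B hB hBT hk
end

section
/- Let π ∈ S_n be an involution and let π̂ be the associated monomial anti-symmetric ±1-matrix with rank-control matrix R = (r_{ij}), where we set r_{0,k} = 0 for 0 ≤ k < n. Define 𝔄(π) = #{(i,j) : 1 ≤ i < j ≤ n and r_{ij} = r_{i-1,j-1}}. Then 𝔄(π) = 𝔍(π) + Σ_{a : π(a)=a} (n − a), where 𝔍(π) is the number of inversions of the word i₁ j₁ i₂ j₂ ⋯ i_k j_k obtained by writing π = (i₁,j₁)(i₂,j₂)⋯(i_k,j_k) as disjoint transpositions with i_t < j_t for all t and i₁ < i₂ < ⋯ < i_k. -/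
open Matrix

/-- `M` is a monomial anti-symmetric matrix with nonzero entries `±1`,
the `+1`'s above the main diagonal and the `-1`'s below it. -/
def GoodMat {n : ℕ} (M : Matrix (Fin n) (Fin n) ℂ) : Prop :=
  Mᵀ = -M ∧
  (∀ i j k : Fin n, M i j ≠ 0 → M i k ≠ 0 → j = k) ∧
  (∀ i j k : Fin n, M j i ≠ 0 → M k i ≠ 0 → j = k) ∧
  (∀ i j : Fin n, M i j = 0 ∨ (i < j ∧ M i j = 1) ∨ (j < i ∧ M i j = -1))

/-- The monomial anti-symmetric `±1`-matrix associated to an involution. -/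
def invMat {n : ℕ} (π : Equiv.Perm (Fin n)) : Matrix (Fin n) (Fin n) ℂ :=
  fun i j => if i < j ∧ π i = j then 1 else if j < i ∧ π j = i then -1 else 0

/-- Rank-control function: rank of the upper-left `k × l` submatrix
(with natural-number indices, clipped at `n`; in particular `rc A 0 l = 0`). -/
noncomputable def rc {n : ℕ} (A : Matrix (Fin n) (Fin n) ℂ) (k l : ℕ) : ℕ :=
  (A.submatrix (fun x : Fin (min k n) => Fin.castLE (min_le_right k n) x)
    (fun y : Fin (min l n) => Fin.castLE (min_le_right l n) y)).rank

/-- The parameter `𝔄`: the number of equalities along the diagonals of the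
strict upper triangle of the rank-control matrix, with `r₀ₖ := 0`. -/
noncomputable def AA {n : ℕ} (A : Matrix (Fin n) (Fin n) ℂ) : ℕ :=
  (Finset.univ.filter (fun p : Fin n × Fin n =>
    (p.1 : ℕ) < (p.2 : ℕ) ∧
      rc A ((p.1 : ℕ) + 1) ((p.2 : ℕ) + 1) = rc A (p.1 : ℕ) (p.2 : ℕ))).card

/-- Number of inversions of a word. -/
def inversions (w : List ℕ) : ℕ :=
  ((Finset.range w.length ×ˢ Finset.range w.length).filter
    (fun p => p.1 < p.2 ∧ w.getD p.2 0 < w.getD p.1 0)).card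

/-- `l` is the canonic form of the involution `π`: the list of the disjoint
transpositions `(iₜ, jₜ)` of `π` with `iₜ < jₜ`, sorted by first entries. -/
def IsCanonic {n : ℕ} (π : Equiv.Perm (Fin n)) (l : List (Fin n × Fin n)) : Prop :=
  (∀ p ∈ l, p.1 < p.2 ∧ π p.1 = p.2) ∧
  (∀ a : Fin n, a < π a → (a, π a) ∈ l) ∧
  l.Pairwise (fun p q => p.1 < q.1)

/-- The word `i₁ j₁ i₂ j₂ ⋯ iₖ jₖ` (with 1-indexed letters) of a canonic form. -/
def wordOf {n : ℕ} (l : List (Fin n × Fin n)) : List ℕ :=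
  l.flatMap fun p => [(p.1 : ℕ) + 1, (p.2 : ℕ) + 1]

section Aux

variable {n : ℕ} {π : Equiv.Perm (Fin n)}

lemma invMat_zero (hπ : ∀ a, π (π a) = a) {i j : Fin n} (h : π i ≠ j) :
    invMat π i j = 0 := by
  unfold invMat
  rw [if_neg, if_neg]
  · rintro ⟨-, hj⟩
    exact h (by rw [← hj, hπ])
  · rintro ⟨-, hj⟩; exact h hj

lemma invMat_diag {i : Fin n} : invMat π i i = 0 := by
  unfold invMat
  rw [if_neg (by simp), if_neg (by simp)]

lemma invMat_nonzero (hπ : ∀ a, π (π a) = a) {i j : Fin n} (h : π i = j) (h2 : i ≠ j) :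
    invMat π i j ≠ 0 := by
  unfold invMat
  rcases lt_or_gt_of_ne h2 with hlt | hgt
  · rw [if_pos ⟨hlt, h⟩]; norm_num
  · rw [if_neg, if_pos ⟨hgt, by rw [← h, hπ]⟩]
    · norm_num
    · rintro ⟨h1, -⟩; exact absurd h1 hgt.asymm

lemma row_single (hπ : ∀ a, π (π a) = a) {K L : ℕ} (hK : K ≤ n) (hL : L ≤ n) (x : Fin K)
    (h1 : π (Fin.castLE hK x) ≠ Fin.castLE hK x) (h2 : ((π (Fin.castLE hK x)) : ℕ) < L) :
    (fun y : Fin L => invMat π (Fin.castLE hK x) (Fin.castLE hL y))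
      = invMat π (Fin.castLE hK x) (π (Fin.castLE hK x)) •
          (Pi.single (⟨((π (Fin.castLE hK x)) : ℕ), h2⟩ : Fin L) (1 : ℂ) : Fin L → ℂ) := by
  funext y
  rw [Pi.smul_apply, Pi.single_apply]
  by_cases hy : y = (⟨((π (Fin.castLE hK x)) : ℕ), h2⟩ : Fin L)
  · rw [if_pos hy, smul_eq_mul, mul_one, hy]
    congr 1
    
  · rw [if_neg hy, smul_zero]
    exact invMat_zero hπ (fun hc => hy (Fin.ext (congrArg Fin.val hc).symm))

lemma rc_eq (hπ : ∀ a, π (π a) = a) (k l : ℕ) :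
    rc (invMat π) k l
      = (Finset.univ.filter fun a : Fin n =>
          (a : ℕ) < k ∧ π a ≠ a ∧ ((π a : ℕ) < l)).card := by
  classical
  set K := min k n with hKdef
  set L := min l n with hLdef
  have hK : K ≤ n := min_le_right k n
  have hL : L ≤ n := min_le_right l n
  set S : Matrix (Fin K) (Fin L) ℂ :=
    (invMat π).submatrix (fun x : Fin K => Fin.castLE hK x) (fun y : Fin L => Fin.castLE hL y)
      with hS
  set J : Finset (Fin L) := Finset.univ.filter
      (fun y : Fin L => π (Fin.castLE hL y) ≠ Fin.castLE hL y ∧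
        ((π (Fin.castLE hL y)) : ℕ) < K) with hJ
  -- span equality
  have hspan : Submodule.span ℂ (Set.range S)
      = Submodule.span ℂ ((fun y : Fin L => Pi.single y (1 : ℂ)) '' ↑J) := by
    apply le_antisymm
    · rw [Submodule.span_le]
      rintro - ⟨x, rfl⟩
      by_cases hx : π (Fin.castLE hK x) ≠ Fin.castLE hK x ∧ ((π (Fin.castLE hK x)) : ℕ) < L
      · have hrow : S x = invMat π (Fin.castLE hK x) (π (Fin.castLE hK x)) •
            (Pi.single (⟨((π (Fin.castLE hK x)) : ℕ), hx.2⟩ : Fin L) (1 : ℂ) : Fin L → ℂ) :=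
          row_single hπ hK hL x hx.1 hx.2
        rw [hrow]
        refine Submodule.smul_mem _ _ (Submodule.subset_span ?_)
        refine ⟨⟨((π (Fin.castLE hK x)) : ℕ), hx.2⟩, ?_, rfl⟩
        simp only [hJ, Finset.coe_filter, Set.mem_setOf_eq, Finset.mem_univ, true_and]
        have hcast : Fin.castLE hL (⟨((π (Fin.castLE hK x)) : ℕ), hx.2⟩ : Fin L)
            = π (Fin.castLE hK x) := Fin.ext rfl
        rw [hcast, hπ]
        exact ⟨fun hc => hx.1 hc.symm, x.2⟩
      · have hrow : S x = 0 := by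
          funext y
          show invMat π (Fin.castLE hK x) (Fin.castLE hL y) = 0
          by_cases hc : π (Fin.castLE hK x) = Fin.castLE hL y
          · rcases not_and_or.mp hx with hfix | hbig
            · push_neg at hfix
              rw [← hc, hfix]
              exact invMat_diag
            · exact absurd (hc ▸ y.2) hbig
          · exact invMat_zero hπ hc
        rw [hrow]; exact Submodule.zero_mem _
    · rw [Submodule.span_le]
      rintro - ⟨y, hy, rfl⟩
      simp only [hJ, Finset.coe_filter, Set.mem_setOf_eq, Finset.mem_univ, true_and] at hy
      set x0 : Fin K := ⟨((π (Fin.castLE hL y)) : ℕ), hy.2⟩ with hx0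
      have hcx : Fin.castLE hK x0 = π (Fin.castLE hL y) := Fin.ext rfl
      have h1 : π (Fin.castLE hK x0) ≠ Fin.castLE hK x0 := by
        rw [hcx, hπ]
        exact fun hc => hy.1 hc.symm
      have h2 : ((π (Fin.castLE hK x0)) : ℕ) < L := by rw [hcx, hπ]; exact y.2
      have hrow : S x0 = invMat π (Fin.castLE hK x0) (π (Fin.castLE hK x0)) •
          (Pi.single (⟨((π (Fin.castLE hK x0)) : ℕ), h2⟩ : Fin L) (1 : ℂ) : Fin L → ℂ) :=
        row_single hπ hK hL x0 h1 h2
      have hyeq : (⟨((π (Fin.castLE hK x0)) : ℕ), h2⟩ : Fin L) = y := by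
        apply Fin.ext
        show ((π (Fin.castLE hK x0)) : ℕ) = (y : ℕ)
        rw [hcx, hπ]; rfl
      have hc0 : invMat π (Fin.castLE hK x0) (π (Fin.castLE hK x0)) ≠ 0 :=
        invMat_nonzero hπ rfl (fun hc => h1 hc.symm)
      have : Pi.single y (1 : ℂ)
          = (invMat π (Fin.castLE hK x0) (π (Fin.castLE hK x0)))⁻¹ • S x0 := by
        rw [hrow, hyeq, smul_smul, inv_mul_cancel₀ hc0, one_smul]
      show Pi.single y (1 : ℂ) ∈ (Submodule.span ℂ (Set.range S) : Submodule ℂ (Fin L → ℂ))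
      rw [this]
      exact Submodule.smul_mem _ _ (Submodule.subset_span ⟨x0, rfl⟩)
  -- rank = card J
  have hrank : S.rank = J.card := by
    rw [Matrix.rank_eq_finrank_span_row]
    change Module.finrank ℂ ↥(Submodule.span ℂ (Set.range S)) = J.card
    rw [hspan]
    rw [Set.image_eq_range, finrank_span_eq_card]
    · simp
    · have : (fun y : ↑(↑J : Set (Fin L)) => Pi.single (y : Fin L) (1 : ℂ))
          = (⇑(Pi.basisFun ℂ (Fin L)) ∘ Subtype.val) := by
        funext y; rw [Function.comp_apply, Pi.basisFun_apply]
      rw [this]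
      exact (Pi.basisFun ℂ (Fin L)).linearIndependent.comp Subtype.val Subtype.coe_injective
  show S.rank = _
  rw [hrank]
  -- card J = target
  refine Finset.card_bij' (fun y _ => π (Fin.castLE hL y))
    (fun a ha => ⟨(π a : ℕ), ?_⟩) ?_ ?_ ?_ ?_
  · exact lt_min (Finset.mem_filter.mp ha).2.2.2 (π a).2
  · intro y hy
    simp only [hJ, Finset.mem_filter, Finset.mem_univ, true_and] at hy ⊢
    refine ⟨lt_of_lt_of_le hy.2 (min_le_left k n), ?_, ?_⟩
    · rw [hπ]; exact fun hc => hy.1 hc.symm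
    · rw [hπ]; exact lt_of_lt_of_le y.2 (min_le_left l n)
  · intro a ha
    simp only [hJ, Finset.mem_filter, Finset.mem_univ, true_and] at ha ⊢
    have hcast : Fin.castLE hL (⟨(π a : ℕ), lt_min ha.2.2 (π a).2⟩ : Fin L) = π a :=
      Fin.ext rfl
    rw [hcast, hπ]
    exact ⟨fun hc => ha.2.1 hc.symm, lt_min ha.1 a.2⟩
  · intro y hy
    apply Fin.ext
    show ((π (π (Fin.castLE hL y))) : ℕ) = (y : ℕ)
    rw [hπ]
    rfl
  · intro a ha
    exact (congrArg π (Fin.ext rfl)).trans (hπ a)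

lemma AA_eq (hπ : ∀ a, π (π a) = a) :
    AA (invMat π) = (Finset.univ.filter fun p : Fin n × Fin n =>
      (p.1 : ℕ) < (p.2 : ℕ) ∧
        (π p.1 = p.1 ∨ (p.2 : ℕ) < (π p.1 : ℕ)) ∧
        (π p.2 = p.2 ∨ (p.1 : ℕ) < (π p.2 : ℕ))).card := by
  classical
  unfold AA
  congr 1
  apply Finset.filter_congr
  rintro ⟨i, j⟩ -
  simp only []
  constructor
  · rintro ⟨hij, hrc⟩
    refine ⟨hij, ?_, ?_⟩
    · by_contra hP1
      push_neg at hP1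
      have hi : i ∈ (Finset.univ.filter fun a : Fin n =>
          (a : ℕ) < (i : ℕ) + 1 ∧ π a ≠ a ∧ ((π a : ℕ) < (j : ℕ) + 1)) := by
        simp only [Finset.mem_filter, Finset.mem_univ, true_and]
        exact ⟨Nat.lt_succ_self _, hP1.1, Nat.lt_succ_of_le hP1.2⟩
      rw [rc_eq hπ, rc_eq hπ] at hrc
      have hsub : (Finset.univ.filter fun a : Fin n =>
          (a : ℕ) < (i : ℕ) ∧ π a ≠ a ∧ ((π a : ℕ) < (j : ℕ)))
          ⊆ (Finset.univ.filter fun a : Fin n =>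
          (a : ℕ) < (i : ℕ) + 1 ∧ π a ≠ a ∧ ((π a : ℕ) < (j : ℕ) + 1)) := by
        intro a ha
        simp only [Finset.mem_filter, Finset.mem_univ, true_and] at ha ⊢
        exact ⟨by omega, ha.2.1, by omega⟩
      have heq := Finset.eq_of_subset_of_card_le hsub (le_of_eq hrc)
      rw [← heq] at hi
      simp only [Finset.mem_filter, Finset.mem_univ, true_and] at hi
      omega
    · by_contra hP2
      push_neg at hP2
      have hπj : π (π j) = j := hπ j
      have hi : π j ∈ (Finset.univ.filter fun a : Fin n =>
          (a : ℕ) < (i : ℕ) + 1 ∧ π a ≠ a ∧ ((π a : ℕ) < (j : ℕ) + 1)) := by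
        simp only [Finset.mem_filter, Finset.mem_univ, true_and]
        refine ⟨Nat.lt_succ_of_le hP2.2, ?_, by rw [hπj]; exact Nat.lt_succ_self _⟩
        rw [hπj]
        intro hc
        exact hP2.1 hc.symm
      rw [rc_eq hπ, rc_eq hπ] at hrc
      have hsub : (Finset.univ.filter fun a : Fin n =>
          (a : ℕ) < (i : ℕ) ∧ π a ≠ a ∧ ((π a : ℕ) < (j : ℕ)))
          ⊆ (Finset.univ.filter fun a : Fin n =>
          (a : ℕ) < (i : ℕ) + 1 ∧ π a ≠ a ∧ ((π a : ℕ) < (j : ℕ) + 1)) := by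
        intro a ha
        simp only [Finset.mem_filter, Finset.mem_univ, true_and] at ha ⊢
        exact ⟨by omega, ha.2.1, by omega⟩
      have heq := Finset.eq_of_subset_of_card_le hsub (le_of_eq hrc)
      rw [← heq] at hi
      simp only [Finset.mem_filter, Finset.mem_univ, true_and] at hi
      rw [hπj] at hi
      omega
  · rintro ⟨hij, hP1, hP2⟩
    refine ⟨hij, ?_⟩
    rw [rc_eq hπ, rc_eq hπ]
    congr 1
    apply Finset.filter_congr
    rintro a -
    constructor
    · rintro ⟨ha1, ha2, ha3⟩
      refine ⟨?_, ha2, ?_⟩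
      · rcases Nat.lt_succ_iff_lt_or_eq.mp ha1 with h | h
        · exact h
        · exfalso
          have : a = i := Fin.ext h
          subst this
          rcases hP1 with h' | h'
          · exact ha2 h'
          · omega
      · rcases Nat.lt_succ_iff_lt_or_eq.mp ha3 with h | h
        · exact h
        · exfalso
          have haj : π a = j := Fin.ext h
          have haa : a = π j := by rw [← haj, hπ]
          rcases hP2 with h' | h'
          · exact ha2 (haj.trans (haa.trans h').symm)
          · rw [← haa] at h'
            omega
    · rintro ⟨ha1, ha2, ha3⟩
      exact ⟨by omega, ha2, by omega⟩

lemma card_gt (a : Fin n) :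
    (Finset.univ.filter fun b : Fin n => (a : ℕ) < (b : ℕ)).card = n - 1 - (a : ℕ) := by
  have : (Finset.univ.filter fun b : Fin n => (a : ℕ) < (b : ℕ)).card
      = (Finset.Ico ((a : ℕ) + 1) n).card := by
    refine Finset.card_bij' (fun b _ => (b : ℕ))
      (fun m hm => ⟨m, (Finset.mem_Ico.mp hm).2⟩) ?_ ?_ ?_ ?_
    · intro b hb
      simp only [Finset.mem_filter, Finset.mem_univ, true_and] at hb
      exact Finset.mem_Ico.mpr ⟨hb, b.2⟩
    · intro m hm
      simp only [Finset.mem_filter, Finset.mem_univ, true_and]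
      exact (Finset.mem_Ico.mp hm).1
    · intro b _; rfl
    · intro m _; rfl
  rw [this, Nat.card_Ico]
  omega

lemma partA (hπ : ∀ a, π (π a) = a) :
    (Finset.univ.filter fun p : Fin n × Fin n =>
      (p.1 : ℕ) < (p.2 : ℕ) ∧
        ((π p.1 = p.1 ∨ (p.2 : ℕ) < (π p.1 : ℕ)) ∧
         (π p.2 = p.2 ∨ (p.1 : ℕ) < (π p.2 : ℕ))) ∧
        (π p.1 = p.1 ∨ π p.2 = p.2)).card
      = ∑ a ∈ Finset.univ.filter (fun a : Fin n => π a = a), (n - 1 - (a : ℕ)) := by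
  classical
  have hS2 : (Finset.univ.filter fun q : Fin n × Fin n =>
      π q.1 = q.1 ∧ (q.1 : ℕ) < (q.2 : ℕ)).card
      = ∑ a ∈ Finset.univ.filter (fun a : Fin n => π a = a), (n - 1 - (a : ℕ)) := by
    rw [Finset.card_eq_sum_card_fiberwise
      (f := Prod.fst) (t := Finset.univ.filter (fun a : Fin n => π a = a)) ?_]
    · apply Finset.sum_congr rfl
      intro a ha
      rw [← card_gt a]
      refine Finset.card_bij' (fun p _ => p.2) (fun b _ => (a, b)) ?_ ?_ ?_ ?_
      · intro p hp
        simp only [Finset.mem_filter, Finset.mem_univ, true_and] at hp ⊢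
        rcases hp with ⟨⟨-, h2⟩, h3⟩
        rw [← h3]; exact h2
      · intro b hb
        simp only [Finset.mem_filter, Finset.mem_univ, true_and] at hb ha ⊢
        exact ⟨⟨ha, hb⟩, trivial⟩
      · intro p hp
        simp only [Finset.mem_filter, Finset.mem_univ, true_and] at hp
        exact Prod.ext hp.2.symm rfl
      · intro b _; rfl
    · intro p hp
      simp only [Finset.coe_filter, Finset.mem_coe, Set.mem_setOf_eq, Finset.mem_filter, Finset.mem_univ, true_and] at hp ⊢
      exact hp.1
  rw [← hS2]
  refine Finset.card_bij'
    (fun p _ => if π p.1 = p.1 then p else (p.2, π p.1))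
    (fun q _ => if π q.2 ≠ q.2 ∧ (π q.2 : ℕ) < (q.1 : ℕ) then (π q.2, q.1) else q)
    ?_ ?_ ?_ ?_
  · rintro ⟨b, c⟩ hp
    simp only [Finset.mem_filter, Finset.mem_univ, true_and] at hp
    obtain ⟨hbc, ⟨hP1, hP2⟩, hfix⟩ := hp
    dsimp only
    by_cases hb : π b = b
    · rw [if_pos hb]
      simp only [Finset.mem_filter, Finset.mem_univ, true_and]
      exact ⟨hb, hbc⟩
    · rw [if_neg hb]
      simp only [Finset.mem_filter, Finset.mem_univ, true_and]
      rcases hP1 with h | h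
      · exact absurd h hb
      · rcases hfix with h' | h'
        · exact absurd h' hb
        · exact ⟨h', h⟩
  · rintro ⟨a, x⟩ hq
    simp only [Finset.mem_filter, Finset.mem_univ, true_and] at hq
    obtain ⟨hfa, hax⟩ := hq
    dsimp only
    by_cases hx : π x ≠ x ∧ (π x : ℕ) < (a : ℕ)
    · rw [if_pos hx]
      simp only [Finset.mem_filter, Finset.mem_univ, true_and]
      refine ⟨?_, ⟨?_, ?_⟩, ?_⟩
      · exact hx.2
      · right
        rw [hπ]
        have : π x ≠ x := hx.1
        rcases Nat.lt_or_ge (a : ℕ) (x : ℕ) with h | h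
        · exact h
        · exact absurd (Fin.ext (Nat.le_antisymm (by omega) (by omega)) : a = x)
            (fun he => this (he ▸ hfa))
      · left; exact hfa
      · right; exact hfa
    · rw [if_neg hx]
      simp only [Finset.mem_filter, Finset.mem_univ, true_and]
      push_neg at hx
      refine ⟨hax, ⟨Or.inl hfa, ?_⟩, Or.inl hfa⟩
      by_cases hfx : π x = x
      · left; exact hfx
      · right
        have h1 : (a : ℕ) ≤ (π x : ℕ) := hx hfx
        have h2 : a ≠ π x := by
          intro he
          apply hfx
          have hx1 : π a = x := by rw [he, hπ]
          rw [hfa] at hx1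
          rw [← hx1]
          exact hfa
        exact lt_of_le_of_ne h1 (fun hv => h2 (Fin.ext hv))
  · rintro ⟨b, c⟩ hp
    simp only [Finset.mem_filter, Finset.mem_univ, true_and] at hp
    obtain ⟨hbc, ⟨hP1, hP2⟩, hfix⟩ := hp
    dsimp only
    by_cases hb : π b = b
    · rw [if_pos hb]
      dsimp only
      rw [if_neg]
      push_neg
      intro hc
      rcases hP2 with h | h
      · exact absurd h hc
      · omega
    · rw [if_neg hb]
      dsimp only
      rw [if_pos]
      · have : π (π b) = b := hπ b
        simp only [this]
      · constructor
        · rw [hπ]; exact fun he => hb he.symm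
        · rw [hπ]
          rcases hP1 with h | h
          · exact absurd h hb
          · exact hbc
  · rintro ⟨a, x⟩ hq
    simp only [Finset.mem_filter, Finset.mem_univ, true_and] at hq
    obtain ⟨hfa, hax⟩ := hq
    dsimp only
    by_cases hx : π x ≠ x ∧ (π x : ℕ) < (a : ℕ)
    · rw [if_pos hx]
      dsimp only
      rw [if_neg]
      · simp only [hπ]
      · rw [hπ]; exact fun he => hx.1 he.symm
    · rw [if_neg hx]
      dsimp only
      rw [if_pos hfa]

lemma wordOf_length (l : List (Fin n × Fin n)) : (wordOf l).length = 2 * l.length := by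
  induction l with
  | nil => rfl
  | cons p t ih =>
    show (((p.1 : ℕ) + 1) :: (((p.2 : ℕ) + 1) :: wordOf t)).length = 2 * (t.length + 1)
    simp only [List.length_cons, ih]
    omega

lemma wordOf_get (l : List (Fin n × Fin n)) (u : ℕ) (hu : u < l.length) :
    (wordOf l).getD (2 * u) 0 = ((l.get ⟨u, hu⟩).1 : ℕ) + 1 ∧
    (wordOf l).getD (2 * u + 1) 0 = ((l.get ⟨u, hu⟩).2 : ℕ) + 1 := by
  induction l generalizing u with
  | nil => exact absurd hu (Nat.not_lt_zero u)
  | cons p t ih =>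
    match u with
    | 0 => exact ⟨rfl, rfl⟩
    | u + 1 =>
      have hu' : u < t.length := by simpa using hu
      have h2 : 2 * (u + 1) = (2 * u) + 2 := by omega
      constructor
      · show (wordOf (p :: t)).getD (2 * (u + 1)) 0 = _
        rw [h2]
        show (wordOf t).getD (2 * u) 0 = _
        exact (ih u hu').1
      · show (wordOf (p :: t)).getD (2 * (u + 1) + 1) 0 = _
        rw [h2]
        show (wordOf t).getD (2 * u + 1) 0 = _
        exact (ih u hu').2

lemma partB (hπ : ∀ a, π (π a) = a) (l : List (Fin n × Fin n))
    (hmem : ∀ p ∈ l, p.1 < p.2 ∧ π p.1 = p.2)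
    (hcomp : ∀ a : Fin n, a < π a → (a, π a) ∈ l)
    (hsort : l.Pairwise (fun p q => p.1 < q.1)) :
    (Finset.univ.filter fun p : Fin n × Fin n =>
      (p.1 : ℕ) < (p.2 : ℕ) ∧
        ((π p.1 = p.1 ∨ (p.2 : ℕ) < (π p.1 : ℕ)) ∧
         (π p.2 = p.2 ∨ (p.1 : ℕ) < (π p.2 : ℕ))) ∧
        ¬(π p.1 = p.1 ∨ π p.2 = p.2)).card = inversions (wordOf l) := by
  classical
  set m := l.length with hm
  have hgetmem : ∀ u : Fin m, l.get u ∈ l := fun u => l.get_mem u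
  have hmono : ∀ u v : Fin m, u < v → ((l.get u).1 : ℕ) < ((l.get v).1 : ℕ) :=
    fun u v huv => List.pairwise_iff_get.mp hsort u v huv
  have hmono' : ∀ u v : Fin m, ((l.get u).1 : ℕ) < ((l.get v).1 : ℕ) → u < v := by
    intro u v h
    rcases lt_trichotomy u v with h' | h' | h'
    · exact h'
    · rw [h'] at h; omega
    · exact absurd (hmono v u h') (by omega)
  have hmem2 : ∀ p ∈ l, π p.2 = p.1 := by
    intro p hp
    rw [← (hmem p hp).2, hπ]
  set U : Finset (Fin m × Fin m × Fin 2) := Finset.univ.filter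
    (fun q => q.1 < q.2.1 ∧
      (if q.2.2 = 0 then ((l.get q.2.1).1 : ℕ) else ((l.get q.2.1).2 : ℕ))
        < ((l.get q.1).2 : ℕ)) with hU
  have step1 : (Finset.univ.filter fun p : Fin n × Fin n =>
      (p.1 : ℕ) < (p.2 : ℕ) ∧
        ((π p.1 = p.1 ∨ (p.2 : ℕ) < (π p.1 : ℕ)) ∧
         (π p.2 = p.2 ∨ (p.1 : ℕ) < (π p.2 : ℕ))) ∧
        ¬(π p.1 = p.1 ∨ π p.2 = p.2)).card = U.card := by
    symm
    refine Finset.card_bij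
      (fun q _ => ((l.get q.1).1,
        if q.2.2 = 0 then (l.get q.2.1).1 else (l.get q.2.1).2)) ?_ ?_ ?_
    · rintro ⟨u, v, f⟩ hq
      simp only [hU, Finset.mem_filter, Finset.mem_univ, true_and] at hq ⊢
      obtain ⟨huv, hlt⟩ := hq
      obtain ⟨h12u, hπu⟩ := hmem _ (hgetmem u)
      obtain ⟨h12v, hπv⟩ := hmem _ (hgetmem v)
      have hπu2 : π (l.get u).2 = (l.get u).1 := hmem2 _ (hgetmem u)
      have hπv2 : π (l.get v).2 = (l.get v).1 := hmem2 _ (hgetmem v)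
      have hmuv := hmono u v huv
      by_cases hf : f = 0
      · rw [if_pos hf] at hlt ⊢
        refine ⟨hmuv, ⟨Or.inr ?_, Or.inr ?_⟩, ?_⟩
        · rw [hπu]; exact hlt
        · rw [hπv]; exact lt_trans hmuv h12v
        · rw [hπu, hπv]
          push_neg
          exact ⟨fun hc => by omega, fun hc => by
            rw [hc] at h12v; omega⟩
      · rw [if_neg hf] at hlt ⊢
        refine ⟨lt_trans hmuv h12v, ⟨Or.inr ?_, Or.inr ?_⟩, ?_⟩
        · rw [hπu]; exact hlt
        · rw [hπv2]; exact hmuv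
        · rw [hπu, hπv2]
          push_neg
          exact ⟨fun hc => by omega, fun hc => by
            rw [← hc] at h12v; omega⟩
    · rintro ⟨u, v, f⟩ hq ⟨u', v', f'⟩ hq' heq
      simp only [hU, Finset.mem_filter, Finset.mem_univ, true_and] at hq hq'
      simp only [Prod.mk.injEq] at heq
      obtain ⟨he1, he2⟩ := heq
      have huu : u = u' := by
        by_contra hne
        rcases lt_or_gt_of_ne hne with h | h
        · have := hmono u u' h; omega
        · have := hmono u' u h; omega
      subst huu
      have hvf : v = v' ∧ f = f' := by
        have hπv2 : π (l.get v).2 = (l.get v).1 := hmem2 _ (hgetmem v)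
        have hπv'2 : π (l.get v').2 = (l.get v').1 := hmem2 _ (hgetmem v')
        have hπv : π (l.get v).1 = (l.get v).2 := (hmem _ (hgetmem v)).2
        have hπv' : π (l.get v').1 = (l.get v').2 := (hmem _ (hgetmem v')).2
        have h12v := (hmem _ (hgetmem v)).1
        have h12v' := (hmem _ (hgetmem v')).1
        have veq : ∀ w w' : Fin m, (l.get w).1 = (l.get w').1 → w = w' := by
          intro w w' hww
          by_contra hne
          rcases lt_or_gt_of_ne hne with h | h
          · have := hmono w w' h; omega
          · have := hmono w' w h; omega
        by_cases hf : f = 0 <;> by_cases hf' : f' = 0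
        · rw [if_pos hf, if_pos hf'] at he2
          exact ⟨veq _ _ he2, hf.trans hf'.symm⟩
        · rw [if_pos hf, if_neg hf'] at he2
          exfalso
          have heq2 : (l.get v).2 = (l.get v').1 := by rw [← hπv, ← hπv'2, he2]
          have hv1 : ((l.get v).1 : ℕ) < ((l.get v).2 : ℕ) := h12v
          have hv2 : ((l.get v').1 : ℕ) < ((l.get v').2 : ℕ) := h12v'
          have e1 : ((l.get v).1 : ℕ) = ((l.get v').2 : ℕ) := congrArg Fin.val he2
          have e2 : ((l.get v).2 : ℕ) = ((l.get v').1 : ℕ) := congrArg Fin.val heq2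
          omega
        · rw [if_neg hf, if_pos hf'] at he2
          exfalso
          have heq2 : (l.get v).1 = (l.get v').2 := by rw [← hπv2, ← hπv', he2]
          have hv1 : ((l.get v).1 : ℕ) < ((l.get v).2 : ℕ) := h12v
          have hv2 : ((l.get v').1 : ℕ) < ((l.get v').2 : ℕ) := h12v'
          have e1 : ((l.get v).2 : ℕ) = ((l.get v').1 : ℕ) := congrArg Fin.val he2
          have e2 : ((l.get v).1 : ℕ) = ((l.get v').2 : ℕ) := congrArg Fin.val heq2
          omega
        · rw [if_neg hf, if_neg hf'] at he2
          have heq2 : (l.get v).1 = (l.get v').1 := by rw [← hπv2, ← hπv'2, he2]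
          refine ⟨veq _ _ heq2, ?_⟩
          apply Fin.ext
          have h1 : (f : ℕ) ≠ 0 := fun h0 => hf (Fin.ext h0)
          have h2 : (f' : ℕ) ≠ 0 := fun h0 => hf' (Fin.ext h0)
          have h3 := f.2
          have h4 := f'.2
          omega
      exact Prod.ext rfl (Prod.ext hvf.1 hvf.2)
    · rintro ⟨b, c⟩ hp
      simp only [Finset.mem_filter, Finset.mem_univ, true_and] at hp
      obtain ⟨hbc, ⟨hP1, hP2⟩, hnfix⟩ := hp
      push_neg at hnfix
      obtain ⟨hb, hc⟩ := hnfix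
      have hP1' : (c : ℕ) < (π b : ℕ) := hP1.resolve_left hb
      have hP2' : (b : ℕ) < (π c : ℕ) := hP2.resolve_left hc
      have hbpb : b < π b := by
        have h : (b : ℕ) < (π b : ℕ) := by omega
        exact h
      obtain ⟨u, hu⟩ := List.mem_iff_get.mp (hcomp b hbpb)
      by_cases hcc : c < π c
      · obtain ⟨v, hv⟩ := List.mem_iff_get.mp (hcomp c hcc)
        have huv : u < v := by
          apply hmono'
          rw [hu, hv]
          exact hbc
        refine ⟨⟨u, v, 0⟩, ?_, ?_⟩
        · simp only [hU, Finset.mem_filter, Finset.mem_univ, true_and]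
          refine ⟨huv, ?_⟩
          rw [hu, hv]
          simp only [if_pos trivial]
          exact hP1'
        · show ((l.get u).1, if (0 : Fin 2) = 0 then (l.get v).1 else (l.get v).2) = (b, c)
          rw [if_pos rfl, hu, hv]
      · have hpcc : π c < c := by
          have h1 : ¬ ((c : ℕ) < (π c : ℕ)) := hcc
          have h2 : (π c : ℕ) ≠ (c : ℕ) := fun hval => hc (Fin.ext hval)
          exact Fin.lt_def.mpr (by omega)
        have hcpc : π c < π (π c) := by rw [hπ]; exact hpcc
        obtain ⟨v, hv⟩ := List.mem_iff_get.mp (hcomp (π c) hcpc)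
        have huv : u < v := by
          apply hmono'
          rw [hu, hv]
          exact hP2'
        refine ⟨⟨u, v, 1⟩, ?_, ?_⟩
        · simp only [hU, Finset.mem_filter, Finset.mem_univ, true_and]
          refine ⟨huv, ?_⟩
          rw [hu, hv]
          simp only [if_neg (by decide : ¬ False)]
          show ((π (π c)) : ℕ) < ((π b) : ℕ)
          rw [hπ]
          exact hP1'
        · show ((l.get u).1, if (1 : Fin 2) = 0 then (l.get v).1 else (l.get v).2) = (b, c)
          rw [if_neg (by decide : (1 : Fin 2) ≠ 0), hu, hv]
          show (b, π (π c)) = (b, c)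
          rw [hπ]
  rw [step1]
  unfold inversions
  have hlen : (wordOf l).length = 2 * m := wordOf_length l
  refine Finset.card_bij
    (fun q _ => (2 * (q.1 : ℕ) + 1, 2 * (q.2.1 : ℕ) + (q.2.2 : ℕ))) ?_ ?_ ?_
  · rintro ⟨u, v, f⟩ hq
    simp only [hU, Finset.mem_filter, Finset.mem_univ, true_and] at hq
    obtain ⟨huv, hlt⟩ := hq
    simp only [Finset.mem_filter, Finset.mem_product, Finset.mem_range]
    have hul : (u : ℕ) < m := u.2
    have hvl : (v : ℕ) < m := v.2
    have hfl : (f : ℕ) < 2 := f.2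
    have hw1 : (wordOf l).getD (2 * (u : ℕ) + 1) 0 = ((l.get u).2 : ℕ) + 1 :=
      (wordOf_get l u u.2).2
    have hwv1 : (wordOf l).getD (2 * (v : ℕ)) 0 = ((l.get v).1 : ℕ) + 1 :=
      (wordOf_get l v v.2).1
    have hwv2 : (wordOf l).getD (2 * (v : ℕ) + 1) 0 = ((l.get v).2 : ℕ) + 1 :=
      (wordOf_get l v v.2).2
    have huvv : (u : ℕ) < (v : ℕ) := huv
    refine ⟨⟨by omega, by omega⟩, by omega, ?_⟩
    rw [hw1]
    by_cases hf : f = 0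
    · have hf0 : (f : ℕ) = 0 := by rw [hf]; rfl
      rw [hf0, Nat.add_zero, hwv1]
      rw [if_pos hf] at hlt
      omega
    · have hf1 : (f : ℕ) = 1 := by
        have : (f : ℕ) ≠ 0 := fun h0 => hf (Fin.ext h0)
        omega
      rw [hf1, hwv2]
      rw [if_neg hf] at hlt
      omega
  · rintro ⟨u, v, f⟩ hq ⟨u', v', f'⟩ hq' heq
    simp only [Prod.mk.injEq] at heq
    obtain ⟨h1, h2⟩ := heq
    have hf2 : (f : ℕ) < 2 := f.2
    have hf2' : (f' : ℕ) < 2 := f'.2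
    have hall : (u : ℕ) = (u' : ℕ) ∧ (v : ℕ) = (v' : ℕ) ∧ (f : ℕ) = (f' : ℕ) := by omega
    exact Prod.ext (Fin.ext hall.1) (Prod.ext (Fin.ext hall.2.1) (Fin.ext hall.2.2))
  · rintro ⟨s, t⟩ hp
    simp only [Finset.mem_filter, Finset.mem_product, Finset.mem_range, hlen] at hp
    obtain ⟨⟨hs, ht⟩, hst, hw⟩ := hp
    have hu : s / 2 < m := by omega
    have hv : t / 2 < m := by omega
    have hsplit_s : s = 2 * (s / 2) + s % 2 ∧ s % 2 < 2 := by omega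
    have hsplit_t : t = 2 * (t / 2) + t % 2 ∧ t % 2 < 2 := by omega
    have hws0 : s % 2 = 0 → (wordOf l).getD s 0 = ((l.get ⟨s / 2, hu⟩).1 : ℕ) + 1 := by
      intro h0
      calc (wordOf l).getD s 0 = (wordOf l).getD (2 * (s / 2)) 0 := by congr 1; omega
        _ = _ := (wordOf_get l (s / 2) hu).1
    have hws1 : s % 2 = 1 → (wordOf l).getD s 0 = ((l.get ⟨s / 2, hu⟩).2 : ℕ) + 1 := by
      intro h0
      calc (wordOf l).getD s 0 = (wordOf l).getD (2 * (s / 2) + 1) 0 := by congr 1; omega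
        _ = _ := (wordOf_get l (s / 2) hu).2
    have hwt0 : t % 2 = 0 → (wordOf l).getD t 0 = ((l.get ⟨t / 2, hv⟩).1 : ℕ) + 1 := by
      intro h0
      calc (wordOf l).getD t 0 = (wordOf l).getD (2 * (t / 2)) 0 := by congr 1; omega
        _ = _ := (wordOf_get l (t / 2) hv).1
    have hwt1 : t % 2 = 1 → (wordOf l).getD t 0 = ((l.get ⟨t / 2, hv⟩).2 : ℕ) + 1 := by
      intro h0
      calc (wordOf l).getD t 0 = (wordOf l).getD (2 * (t / 2) + 1) 0 := by congr 1; omega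
        _ = _ := (wordOf_get l (t / 2) hv).2
    -- u < v
    have h12u := (hmem _ (hgetmem ⟨s / 2, hu⟩)).1
    have h12v := (hmem _ (hgetmem ⟨t / 2, hv⟩)).1
    have h12u' : ((l.get ⟨s / 2, hu⟩).1 : ℕ) < ((l.get ⟨s / 2, hu⟩).2 : ℕ) := h12u
    have h12v' : ((l.get ⟨t / 2, hv⟩).1 : ℕ) < ((l.get ⟨t / 2, hv⟩).2 : ℕ) := h12v
    have huvlt : s / 2 < t / 2 := by
      rcases Nat.lt_or_ge (s / 2) (t / 2) with h | h
      · exact h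
      · exfalso
        have hueq : s / 2 = t / 2 := by omega
        have hs0 : s % 2 = 0 := by omega
        have ht1 : t % 2 = 1 := by omega
        rw [hws0 hs0, hwt1 ht1] at hw
        have hfe : (⟨s / 2, hu⟩ : Fin m) = ⟨t / 2, hv⟩ := Fin.ext hueq
        rw [hfe] at hw
        omega
    have hmuv : ((l.get ⟨s / 2, hu⟩).1 : ℕ) < ((l.get ⟨t / 2, hv⟩).1 : ℕ) :=
      hmono ⟨s / 2, hu⟩ ⟨t / 2, hv⟩ (Fin.mk_lt_mk.mpr huvlt)
    have hs1 : s % 2 = 1 := by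
      by_contra h1
      have hs0 : s % 2 = 0 := by omega
      rw [hws0 hs0] at hw
      rcases Nat.lt_or_ge (t % 2) 1 with h | h
      · have ht0 : t % 2 = 0 := by omega
        rw [hwt0 ht0] at hw
        omega
      · have ht1 : t % 2 = 1 := by omega
        rw [hwt1 ht1] at hw
        omega
    refine ⟨⟨⟨s / 2, hu⟩, ⟨t / 2, hv⟩, ⟨t % 2, by omega⟩⟩, ?_, ?_⟩
    · simp only [hU, Finset.mem_filter, Finset.mem_univ, true_and]
      refine ⟨Fin.mk_lt_mk.mpr huvlt, ?_⟩
      rw [hws1 hs1] at hw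
      by_cases hf : (⟨t % 2, by omega⟩ : Fin 2) = 0
      · rw [if_pos hf]
        have ht0 : t % 2 = 0 := congrArg Fin.val hf
        rw [hwt0 ht0] at hw
        omega
      · rw [if_neg hf]
        have ht1 : t % 2 = 1 := by
          have : t % 2 ≠ 0 := fun h0 => hf (Fin.ext h0)
          omega
        rw [hwt1 ht1] at hw
        omega
    · show (2 * (s / 2) + 1, 2 * (t / 2) + t % 2) = (s, t)
      refine Prod.ext ?_ ?_
      · show 2 * (s / 2) + 1 = s
        omega
      · show 2 * (t / 2) + t % 2 = t
        omega

end Aux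

/-- `𝔄(π) = 𝔍(π) + Σ_{π(a) = a} (n − a)`, where `𝔍(π)` is the number of
inversions of the word `i₁ j₁ i₂ j₂ ⋯ iₖ jₖ` of the canonic form of the
involution `π` (letters are 1-indexed, so `a ∈ Fin n` is the letter `a + 1`
and `n − a` is `n − 1 − (a : ℕ)`). -/

theorem stmt8 (n : ℕ) (π : Equiv.Perm (Fin n)) (hπ : π * π = 1)
    (l : List (Fin n × Fin n)) (hl : IsCanonic π l) :
    AA (invMat π) =
      inversions (wordOf l) +
        ∑ a ∈ Finset.univ.filter (fun a : Fin n => π a = a), (n - 1 - (a : ℕ)) := by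
  classical
  have hπ' : ∀ a, π (π a) = a := by
    intro a
    rw [← Equiv.Perm.mul_apply, hπ, Equiv.Perm.one_apply]
  obtain ⟨hmem, hcomp, hsort⟩ := hl
  rw [AA_eq hπ']
  rw [← Finset.card_filter_add_card_filter_not
    (p := fun p : Fin n × Fin n => π p.1 = p.1 ∨ π p.2 = p.2),
    Finset.filter_filter, Finset.filter_filter]
  have e1 : (Finset.univ.filter fun p : Fin n × Fin n =>
      ((p.1 : ℕ) < (p.2 : ℕ) ∧
        (π p.1 = p.1 ∨ (p.2 : ℕ) < (π p.1 : ℕ)) ∧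
        (π p.2 = p.2 ∨ (p.1 : ℕ) < (π p.2 : ℕ))) ∧
        (π p.1 = p.1 ∨ π p.2 = p.2))
      = (Finset.univ.filter fun p : Fin n × Fin n =>
      (p.1 : ℕ) < (p.2 : ℕ) ∧
        ((π p.1 = p.1 ∨ (p.2 : ℕ) < (π p.1 : ℕ)) ∧
         (π p.2 = p.2 ∨ (p.1 : ℕ) < (π p.2 : ℕ))) ∧
        (π p.1 = p.1 ∨ π p.2 = p.2)) := by
    apply Finset.filter_congr
    rintro p -
    tauto
  have e2 : (Finset.univ.filter fun p : Fin n × Fin n =>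
      ((p.1 : ℕ) < (p.2 : ℕ) ∧
        (π p.1 = p.1 ∨ (p.2 : ℕ) < (π p.1 : ℕ)) ∧
        (π p.2 = p.2 ∨ (p.1 : ℕ) < (π p.2 : ℕ))) ∧
        ¬(π p.1 = p.1 ∨ π p.2 = p.2))
      = (Finset.univ.filter fun p : Fin n × Fin n =>
      (p.1 : ℕ) < (p.2 : ℕ) ∧
        ((π p.1 = p.1 ∨ (p.2 : ℕ) < (π p.1 : ℕ)) ∧
         (π p.2 = p.2 ∨ (p.1 : ℕ) < (π p.2 : ℕ))) ∧
        ¬(π p.1 = p.1 ∨ π p.2 = p.2)) := by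
    apply Finset.filter_congr
    rintro p -
    tauto
  rw [e1, e2, partA hπ', partB hπ' l hmem hcomp hsort]
  exact Nat.add_comm _ _
end

section
/- Let A be an n×m matrix over a field with rank(A_{k−1,ℓ−1}) = rank(A_{k,ℓ}) = c, where A_{p,q} denotes the upper-left p×q submatrix. Then the entry a_{k,ℓ} is determined by the other entries of A_{k,ℓ}: specifically, every (c+1)×(c+1) minor of A_{k,ℓ} vanishes, and there exist rows i₁<…<i_c ≤ k−1 and columns j₁<…<j_c ≤ ℓ−1 such that the (c+1)×(c+1) minor on rows i₁,…,i_c,k and columns j₁,…,j_c,ℓ vanishes while the c×c minor on rows i₁,…,i_c and columns j₁,…,j_c is nonzero, giving a polynomial equation involving a_{k,ℓ} with nonzero coefficient. -/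
open Matrix

private lemma aux_rank_row {F : Type*} [Field F] {p p' q : ℕ}
    (B : Matrix (Fin p) (Fin q) F) (f : Fin p' → Fin p) :
    (B.submatrix f id).rank ≤ B.rank := by
  rw [Matrix.rank_eq_finrank_span_row, Matrix.rank_eq_finrank_span_row]
  apply Submodule.finrank_mono
  apply Submodule.span_mono
  rintro x ⟨i, rfl⟩
  exact ⟨f i, rfl⟩

private lemma aux_rank_le {F : Type*} [Field F] {p p' q q' : ℕ}
    (B : Matrix (Fin p) (Fin q) F) (f : Fin p' → Fin p) (g : Fin q' → Fin q) :
    (B.submatrix f g).rank ≤ B.rank := by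
  have h1 : B.submatrix f g = (B.submatrix f id).submatrix id g := rfl
  rw [h1]
  refine le_trans ?_ (aux_rank_row B f)
  rw [← Matrix.rank_transpose, Matrix.transpose_submatrix,
    ← Matrix.rank_transpose (B.submatrix f id)]
  exact aux_rank_row _ g

private lemma exists_indep_subfamily {F : Type*} [Field F] {ι V : Type*} [Fintype ι]
    [AddCommGroup V] [Module F V] (v : ι → V) (c : ℕ)
    (h : Module.finrank F (Submodule.span F (Set.range v)) = c) :
    ∃ s : Fin c → ι, Function.Injective s ∧ LinearIndependent F (v ∘ s) := by
  classical
  obtain ⟨b, hb1, hb2, hb3⟩ := exists_linearIndependent F (Set.range v)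
  have hbfin : b.Finite := (Set.finite_range v).subset hb1
  haveI := hbfin.fintype
  have hcard : Fintype.card b = c := by
    have h' := finrank_span_set_eq_card hb3
    rw [hb2, h] at h'
    rw [Set.toFinset_card] at h'
    exact h'.symm
  let e : Fin c ≃ b := (Fintype.equivFinOfCardEq hcard).symm
  have hg : ∀ x : b, ∃ j : ι, v j = (x : V) := fun x => hb1 x.2
  choose g hgspec using hg
  refine ⟨fun i => g (e i), ?_, ?_⟩
  · intro i j hij
    apply e.injective
    apply Subtype.ext
    rw [← hgspec (e i), ← hgspec (e j)]
    exact congrArg v hij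
  · have hcomp : v ∘ (fun i => g (e i)) = (Subtype.val : b → V) ∘ e := by
      funext i; exact hgspec (e i)
    rw [hcomp]
    exact hb3.comp e e.injective

private lemma exists_strictMono_perm {a q : ℕ} (f : Fin a → Fin q)
    (hf : Function.Injective f) :
    ∃ (g : Fin a → Fin q) (σ : Equiv.Perm (Fin a)), StrictMono g ∧ ∀ i, g i = f (σ i) := by
  classical
  have hT : (Finset.image f Finset.univ).card = a := by
    rw [Finset.card_image_of_injective _ hf, Finset.card_univ, Fintype.card_fin]
  set g := (Finset.image f Finset.univ).orderEmbOfFin hT with hgdef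
  have hginj : Function.Injective (fun i => g i) := g.injective
  have hrange : Set.range (fun i => g i) = Set.range f := by
    show Set.range g = Set.range f
    rw [Finset.range_orderEmbOfFin, Finset.coe_image, Finset.coe_univ, Set.image_univ]
  refine ⟨fun i => g i, (Equiv.ofInjective _ hginj).trans
    ((Equiv.setCongr hrange).trans (Equiv.ofInjective f hf).symm), g.strictMono, fun i => ?_⟩
  have h2 := Equiv.apply_ofInjective_symm hf
    ((Equiv.setCongr hrange) ((Equiv.ofInjective (fun i => g i) hginj) i))
  simpa using h2.symm

private lemma exists_nonzero_minor {F : Type*} [Field F] {p q c : ℕ}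
    (M : Matrix (Fin p) (Fin q) F) (h : M.rank = c) :
    ∃ (r : Fin c → Fin p) (s : Fin c → Fin q), StrictMono r ∧ StrictMono s ∧
      (M.submatrix r s).det ≠ 0 := by
  classical
  obtain ⟨s, hs_inj, hs_li⟩ := exists_indep_subfamily (F := F) Mᵀ c
    (by exact (Matrix.rank_eq_finrank_span_cols M).symm.trans h)
  set N : Matrix (Fin p) (Fin c) F := M.submatrix id s with hN
  have hrankN : N.rank = c := by
    rw [← Matrix.rank_transpose]
    have hNt : Nᵀ = Matrix.of (Mᵀ ∘ s) := rfl
    rw [hNt]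
    exact (LinearIndependent.rank_matrix (M := Matrix.of (Mᵀ ∘ s)) hs_li).trans
      (Fintype.card_fin c)
  obtain ⟨r, hr_inj, hr_li⟩ := exists_indep_subfamily (F := F) (fun i => N i) c
    (by exact (Matrix.rank_eq_finrank_span_row N).symm.trans hrankN)
  have hdet : (M.submatrix r s).det ≠ 0 := by
    have hu : IsUnit (M.submatrix r s) := by
      apply Matrix.linearIndependent_rows_iff_isUnit.mp
      exact hr_li
    exact ((Matrix.isUnit_iff_isUnit_det _).mp hu).ne_zero
  obtain ⟨r', σ, hr'm, hrs⟩ := exists_strictMono_perm r hr_inj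
  obtain ⟨s', τ, hs'm, hst⟩ := exists_strictMono_perm s hs_inj
  refine ⟨r', s', hr'm, hs'm, ?_⟩
  have heq : M.submatrix r' s' = ((M.submatrix r s).submatrix σ id).submatrix id τ := by
    ext i j
    simp [Matrix.submatrix_apply, hrs, hst]
  rw [heq, Matrix.det_permute', Matrix.det_permute]
  rcases Int.units_eq_one_or σ.sign with hσ | hσ <;>
    rcases Int.units_eq_one_or τ.sign with hτ | hτ <;>
      simp [hσ, hτ, hdet]

/-- If `rank A_{k−1,ℓ−1} = rank A_{k,ℓ} = c`, then every `(c+1)×(c+1)` minor of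
`A_{k,ℓ}` vanishes, and there are rows `i₁<…<i_c ≤ k−1` and columns
`j₁<…<j_c ≤ ℓ−1` such that the `(c+1)×(c+1)` minor on rows `i₁,…,i_c,k` and
columns `j₁,…,j_c,ℓ` vanishes while the `c×c` minor on rows `i₁,…,i_c` and
columns `j₁,…,j_c` is nonzero: a polynomial equation involving `a_{k,ℓ}` with
nonzero coefficient. -/
theorem stmt15 {F : Type*} [Field F] (n m : ℕ) (A : Matrix (Fin n) (Fin m) F)
    (k l c : ℕ) (hk1 : 1 ≤ k) (hk : k ≤ n) (hl1 : 1 ≤ l) (hl : l ≤ m)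
    (h1 : (A.submatrix (Fin.castLE (show k - 1 ≤ n by omega))
      (Fin.castLE (show l - 1 ≤ m by omega))).rank = c)
    (h2 : (A.submatrix (Fin.castLE hk) (Fin.castLE hl)).rank = c) :
    (∀ (r : Fin (c + 1) → Fin n) (s : Fin (c + 1) → Fin m),
        (∀ t, (r t : ℕ) < k) → (∀ t, (s t : ℕ) < l) → (A.submatrix r s).det = 0) ∧
    ∃ (ri : Fin c → Fin n) (cj : Fin c → Fin m),
      StrictMono ri ∧ StrictMono cj ∧
      (∀ t, (ri t : ℕ) < k - 1) ∧ (∀ t, (cj t : ℕ) < l - 1) ∧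
      (A.submatrix (Fin.snoc ri ⟨k - 1, by omega⟩)
        (Fin.snoc cj ⟨l - 1, by omega⟩)).det = 0 ∧
      (A.submatrix ri cj).det ≠ 0 := by
  have part1 : ∀ (r : Fin (c + 1) → Fin n) (s : Fin (c + 1) → Fin m),
      (∀ t, (r t : ℕ) < k) → (∀ t, (s t : ℕ) < l) → (A.submatrix r s).det = 0 := by
    intro r s hr hs
    by_contra hdet
    have hu : IsUnit (A.submatrix r s) :=
      (Matrix.isUnit_iff_isUnit_det _).mpr (isUnit_iff_ne_zero.mpr hdet)
    have hrk : (A.submatrix r s).rank = c + 1 := by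
      rw [Matrix.rank_of_isUnit _ hu, Fintype.card_fin]
    have heq : A.submatrix r s =
        (A.submatrix (Fin.castLE hk) (Fin.castLE hl)).submatrix
          (fun t => (⟨(r t : ℕ), hr t⟩ : Fin k)) (fun t => (⟨(s t : ℕ), hs t⟩ : Fin l)) := by
      ext i j; rfl
    have hle := aux_rank_le (A.submatrix (Fin.castLE hk) (Fin.castLE hl))
      (fun t => (⟨(r t : ℕ), hr t⟩ : Fin k)) (fun t => (⟨(s t : ℕ), hs t⟩ : Fin l))
    rw [← heq, hrk, h2] at hle
    omega
  obtain ⟨r, s, hrm, hsm, hdet⟩ := exists_nonzero_minor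
    (A.submatrix (Fin.castLE (show k - 1 ≤ n by omega))
      (Fin.castLE (show l - 1 ≤ m by omega))) h1
  refine ⟨part1, fun t => ⟨(r t : ℕ), by omega⟩, fun t => ⟨(s t : ℕ), by omega⟩,
    ?_, ?_, fun t => (r t).isLt, fun t => (s t).isLt, ?_, ?_⟩
  · intro a b hab
    exact hrm hab
  · intro a b hab
    exact hsm hab
  · apply part1
    · intro t
      refine Fin.lastCases ?_ ?_ t
      · rw [Fin.snoc_last]
        show k - 1 < k
        omega
      · intro i
        rw [Fin.snoc_castSucc]
        have := (r i).isLt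
        show (r i : ℕ) < k
        omega
    · intro t
      refine Fin.lastCases ?_ ?_ t
      · rw [Fin.snoc_last]
        show l - 1 < l
        omega
      · intro i
        rw [Fin.snoc_castSucc]
        have := (s i).isLt
        show (s i : ℕ) < l
        omega
  · exact hdet
end
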